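/- In the nested-metric-space setting, suppose in addition that X_∞ is dense in (X_k, d_k) for every k ≥ k₀, and that G ⊆ X_{k₀} is an open subset of the metric space (X_{k₀}, d_{k₀}) such that G ∩ X_k is dense in (X_k, d_k) for every k ≥ k₀. Then G ∩ X_∞ is an open and dense subset of the metric space (X_∞, d_∞). -/

import Mathlib

/-- Nested metric spaces, open/dense version: in the setting of the nested family
`(Xs k, d k)` (`k ≥ k₀`) of complete metric spaces with `d k ≤ d (k+1)` on `Xs (k+1)`,
suppose `X∞ = ⋂_{k ≥ k₀} Xs k` is dense in each `(Xs k, d k)`, and `G ⊆ Xs k₀` is open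
in `(Xs k₀, d k₀)` with `G ∩ Xs k` dense in `(Xs k, d k)` for every `k ≥ k₀`.
Then `G ∩ X∞` is open and dense in `(X∞, d∞)`, where
`d∞(x,y) = Σ_{k ≥ k₀} 2^{-k} d_k(x,y)/(1 + d_k(x,y))`. -/
theorem nested_metric_open_dense {X : Type*} (k₀ : ℕ) (Xs : ℕ → Set X)
    (d : ℕ → X → X → ℝ) (G : Set X)
    (hnested : ∀ k, k₀ ≤ k → Xs (k + 1) ⊆ Xs k)
    (hzero : ∀ k, k₀ ≤ k → ∀ x ∈ Xs k, ∀ y ∈ Xs k, (d k x y = 0 ↔ x = y))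
    (hsymm : ∀ k, k₀ ≤ k → ∀ x ∈ Xs k, ∀ y ∈ Xs k, d k x y = d k y x)
    (htri : ∀ k, k₀ ≤ k → ∀ x ∈ Xs k, ∀ y ∈ Xs k, ∀ z ∈ Xs k,
      d k x z ≤ d k x y + d k y z)
    (hnonneg : ∀ k, k₀ ≤ k → ∀ x ∈ Xs k, ∀ y ∈ Xs k, 0 ≤ d k x y)
    (hcomplete : ∀ k, k₀ ≤ k → ∀ u : ℕ → X, (∀ m, u m ∈ Xs k) →
      (∀ ε : ℝ, 0 < ε → ∃ N, ∀ m n, N ≤ m → N ≤ n → d k (u m) (u n) < ε) →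
      ∃ x ∈ Xs k, ∀ ε : ℝ, 0 < ε → ∃ N, ∀ m, N ≤ m → d k (u m) x < ε)
    (hmono : ∀ k, k₀ ≤ k → ∀ x ∈ Xs (k + 1), ∀ y ∈ Xs (k + 1), d k x y ≤ d (k + 1) x y)
    (hXinfDense : ∀ k, k₀ ≤ k → ∀ x ∈ Xs k, ∀ ε : ℝ, 0 < ε →
      ∃ y ∈ {x | ∀ j, k₀ ≤ j → x ∈ Xs j}, d k x y < ε)
    (hGsub : G ⊆ Xs k₀)
    (hGopen : ∀ x ∈ G, ∃ ε : ℝ, 0 < ε ∧ ∀ y ∈ Xs k₀, d k₀ x y < ε → y ∈ G)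
    (hGdense : ∀ k, k₀ ≤ k → ∀ x ∈ Xs k, ∀ ε : ℝ, 0 < ε →
      ∃ y ∈ G ∩ Xs k, d k x y < ε) :
    let Xinf : Set X := {x | ∀ k, k₀ ≤ k → x ∈ Xs k}
    let dinf : X → X → ℝ := fun x y =>
      ∑' k : ℕ, if k₀ ≤ k then (2 : ℝ)⁻¹ ^ k * (d k x y / (1 + d k x y)) else 0
    (∀ x ∈ G ∩ Xinf, ∃ ε : ℝ, 0 < ε ∧ ∀ y ∈ Xinf, dinf x y < ε → y ∈ G ∩ Xinf) ∧
      (∀ x ∈ Xinf, ∀ ε : ℝ, 0 < ε → ∃ y ∈ G ∩ Xinf, dinf x y < ε) := by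
  intro Xinf dinf
  -- subset chain
  have hsub : ∀ j k, k₀ ≤ j → j ≤ k → Xs k ⊆ Xs j := by
    intro j k hj hjk
    induction k, hjk using Nat.le_induction with
    | base => exact fun x hx => hx
    | succ k hk ih => exact fun x hx => ih (hnested k (hj.trans hk) hx)
  -- distance monotone chain
  have hdmono : ∀ j k, k₀ ≤ j → j ≤ k → ∀ x ∈ Xs k, ∀ y ∈ Xs k, d j x y ≤ d k x y := by
    intro j k hj hjk
    induction k, hjk using Nat.le_induction with
    | base => exact fun x _ y _ => le_refl _
    | succ k hk ih =>
      intro x hx y hy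
      have hx' := hnested k (hj.trans hk) hx
      have hy' := hnested k (hj.trans hk) hy
      exact (ih x hx' y hy').trans (hmono k (hj.trans hk) x hx y hy)
  have hhalf : Summable (fun j : ℕ => (2 : ℝ)⁻¹ ^ j) :=
    summable_geometric_of_lt_one (by norm_num) (by norm_num)
  -- nonnegativity of the summand
  have hnn : ∀ x ∈ Xinf, ∀ y ∈ Xinf, ∀ j : ℕ,
      (0:ℝ) ≤ (if k₀ ≤ j then (2 : ℝ)⁻¹ ^ j * (d j x y / (1 + d j x y)) else 0) := by
    intro x hx y hy j
    by_cases hj : k₀ ≤ j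
    · have h0 : 0 ≤ d j x y := hnonneg j hj x (hx j hj) y (hy j hj)
      simp only [hj, if_true]
      positivity
    · simp [hj]
  have hle : ∀ x ∈ Xinf, ∀ y ∈ Xinf, ∀ j : ℕ,
      (if k₀ ≤ j then (2 : ℝ)⁻¹ ^ j * (d j x y / (1 + d j x y)) else 0) ≤ (2 : ℝ)⁻¹ ^ j := by
    intro x hx y hy j
    by_cases hj : k₀ ≤ j
    · have h0 : 0 ≤ d j x y := hnonneg j hj x (hx j hj) y (hy j hj)
      simp only [hj, if_true]
      have h1 : d j x y / (1 + d j x y) ≤ 1 := by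
        rw [div_le_one (by linarith)]; linarith
      calc (2 : ℝ)⁻¹ ^ j * (d j x y / (1 + d j x y)) ≤ (2 : ℝ)⁻¹ ^ j * 1 := by
            apply mul_le_mul_of_nonneg_left h1 (by positivity)
        _ = (2 : ℝ)⁻¹ ^ j := by ring
    · simp only [hj, if_false]; positivity
  have hsummable : ∀ x ∈ Xinf, ∀ y ∈ Xinf,
      Summable (fun j : ℕ => if k₀ ≤ j then (2 : ℝ)⁻¹ ^ j * (d j x y / (1 + d j x y)) else 0) := by
    intro x hx y hy
    exact Summable.of_nonneg_of_le (hnn x hx y hy) (hle x hx y hy) hhalf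
  -- monotonicity of t ↦ t/(1+t)
  have hmonot : ∀ a b : ℝ, 0 ≤ a → a ≤ b → a / (1 + a) ≤ b / (1 + b) := by
    intro a b ha hab
    rw [div_le_div_iff₀ (by linarith) (by linarith)]
    nlinarith
  constructor
  · -- openness
    rintro x ⟨hxG, hxI⟩
    obtain ⟨ε, hε, hball⟩ := hGopen x hxG
    set m := min ε 1 with hm
    have hm0 : 0 < m := lt_min hε one_pos
    refine ⟨(2 : ℝ)⁻¹ ^ k₀ * (m / (1 + m)), by positivity, ?_⟩
    intro y hyI hd
    have hxk := hxI k₀ le_rfl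
    have hyk := hyI k₀ le_rfl
    have hd0 : 0 ≤ d k₀ x y := hnonneg k₀ le_rfl x hxk y hyk
    have hterm : (2 : ℝ)⁻¹ ^ k₀ * (d k₀ x y / (1 + d k₀ x y)) ≤ dinf x y := by
      have := Summable.le_tsum (hsummable x hxI y hyI) k₀
        (fun j _ => hnn x hxI y hyI j)
      simp only [dinf]
      simpa using this
    have h2 : (2 : ℝ)⁻¹ ^ k₀ * (d k₀ x y / (1 + d k₀ x y))
        < (2 : ℝ)⁻¹ ^ k₀ * (m / (1 + m)) := lt_of_le_of_lt hterm hd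
    have h3 : d k₀ x y / (1 + d k₀ x y) < m / (1 + m) :=
      lt_of_mul_lt_mul_left h2 (by positivity)
    have h4 : d k₀ x y < m := by
      by_contra h
      push_neg at h
      exact absurd (hmonot m (d k₀ x y) hm0.le h) (not_le.mpr h3)
    exact ⟨hball y hyk (h4.trans_le (min_le_left _ _)), hyI⟩
  · -- density
    intro x hxI ε hε
    obtain ⟨N₀, hN₀⟩ : ∃ n : ℕ, (2 : ℝ)⁻¹ ^ n < ε / 8 :=
      exists_pow_lt_of_lt_one (by positivity) (by norm_num)
    set N := max N₀ k₀ with hNdef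
    have hN : k₀ ≤ N := le_max_right _ _
    have hNs : (2 : ℝ)⁻¹ ^ N < ε / 8 :=
      lt_of_le_of_lt (pow_le_pow_of_le_one (by norm_num) (by norm_num) (le_max_left _ _)) hN₀
    have hxN : x ∈ Xs N := hxI N hN
    -- find z ∈ G ∩ Xs N close to x
    obtain ⟨z, ⟨hzG, hzN⟩, hxz⟩ := hGdense N hN x hxN (ε / 16) (by positivity)
    -- G is open around z in d k₀, hence in d N
    obtain ⟨εz, hεz, hballz⟩ := hGopen z hzG
    -- find y ∈ Xinf close to z in d N
    obtain ⟨y, hyI, hzy⟩ := hXinfDense N hN z hzN (min εz (ε / 16)) (lt_min hεz (by positivity))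
    have hyI' : y ∈ Xinf := hyI
    have hyN : y ∈ Xs N := hyI N hN
    have hyG : y ∈ G := by
      apply hballz y (hyI k₀ le_rfl)
      calc d k₀ z y ≤ d N z y := hdmono k₀ N le_rfl hN z hzN y hyN
        _ < min εz (ε / 16) := hzy
        _ ≤ εz := min_le_left _ _
    have hxyN : d N x y < ε / 8 := by
      calc d N x y ≤ d N x z + d N z y := htri N hN x hxN z hzN y hyN
        _ < ε / 16 + min εz (ε / 16) := by
            exact add_lt_add hxz hzy
        _ ≤ ε / 16 + ε / 16 := by
            exact add_le_add (le_refl _) (min_le_right _ _)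
        _ = ε / 8 := by ring
    refine ⟨y, ⟨hyG, hyI'⟩, ?_⟩
    -- bound dinf x y
    have hdN0 : 0 ≤ d N x y := hnonneg N hN x hxN y hyN
    have hg2sum : Summable (fun j : ℕ => if j < N then (0:ℝ) else (2:ℝ)⁻¹ ^ j) := by
      apply Summable.of_nonneg_of_le (fun j => ?_) (fun j => ?_) hhalf
      · by_cases h : j < N <;> simp [h] <;> positivity
      · by_cases h : j < N <;> simp [h] <;> positivity
    have hg2 : (∑' j : ℕ, if j < N then (0:ℝ) else (2:ℝ)⁻¹ ^ j) = (2:ℝ)⁻¹ ^ N * 2 := by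
      have h := Summable.sum_add_tsum_nat_add (f := fun j : ℕ => if j < N then (0:ℝ) else (2:ℝ)⁻¹ ^ j)
        N hg2sum
      have h1 : (∑ i ∈ Finset.range N, if i < N then (0:ℝ) else (2:ℝ)⁻¹ ^ i) = 0 := by
        apply Finset.sum_eq_zero
        intro i hi
        simp [Finset.mem_range.mp hi]
      have h2 : (∑' i : ℕ, if i + N < N then (0:ℝ) else (2:ℝ)⁻¹ ^ (i + N))
          = (2:ℝ)⁻¹ ^ N * 2 := by
        have : ∀ i : ℕ, (if i + N < N then (0:ℝ) else (2:ℝ)⁻¹ ^ (i + N))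
            = (2:ℝ)⁻¹ ^ i * (2:ℝ)⁻¹ ^ N := by
          intro i
          rw [if_neg (by omega), pow_add]
        rw [tsum_congr this, tsum_mul_right, tsum_geometric_of_lt_one (by norm_num) (by norm_num)]
        norm_num
        ring
      rw [← h, h1, h2, zero_add]
    have hgsum : Summable (fun j : ℕ =>
        (2:ℝ)⁻¹ ^ j * d N x y + (if j < N then (0:ℝ) else (2:ℝ)⁻¹ ^ j)) :=
      (hhalf.mul_right _).add hg2sum
    have hbound : dinf x y ≤ 2 * d N x y + (2:ℝ)⁻¹ ^ N * 2 := by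
      have hfg : ∀ j : ℕ, (if k₀ ≤ j then (2 : ℝ)⁻¹ ^ j * (d j x y / (1 + d j x y)) else 0)
          ≤ (2:ℝ)⁻¹ ^ j * d N x y + (if j < N then (0:ℝ) else (2:ℝ)⁻¹ ^ j) := by
        intro j
        by_cases hj : k₀ ≤ j
        · simp only [hj, if_true]
          by_cases hjN : j < N
          · have hjd0 : 0 ≤ d j x y := hnonneg j hj x (hxI j hj) y (hyI j hj)
            have h1 : d j x y / (1 + d j x y) ≤ d j x y := by
              apply div_le_self hjd0; linarith
            have h2 : d j x y ≤ d N x y := hdmono j N hj hjN.le x hxN y hyN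
            simp only [hjN, if_true, add_zero]
            calc (2 : ℝ)⁻¹ ^ j * (d j x y / (1 + d j x y))
                ≤ (2 : ℝ)⁻¹ ^ j * d j x y := by
                  apply mul_le_mul_of_nonneg_left h1 (by positivity)
              _ ≤ (2 : ℝ)⁻¹ ^ j * d N x y := by
                  apply mul_le_mul_of_nonneg_left h2 (by positivity)
          · simp only [hjN, if_false]
            have := hle x hxI y hyI j
            simp only [hj, if_true] at this
            nlinarith [pow_nonneg (by norm_num : (0:ℝ) ≤ 2⁻¹) j]
        · simp only [hj, if_false]
          by_cases hjN : j < N <;> simp [hjN] <;> positivity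
      calc dinf x y ≤ ∑' j : ℕ, ((2:ℝ)⁻¹ ^ j * d N x y + (if j < N then (0:ℝ) else (2:ℝ)⁻¹ ^ j)) :=
            Summable.tsum_le_tsum hfg (hsummable x hxI y hyI') hgsum
        _ = (∑' j : ℕ, (2:ℝ)⁻¹ ^ j * d N x y) + ∑' j : ℕ, (if j < N then (0:ℝ) else (2:ℝ)⁻¹ ^ j) :=
            Summable.tsum_add (hhalf.mul_right _) hg2sum
        _ = 2 * d N x y + (2:ℝ)⁻¹ ^ N * 2 := by
            rw [tsum_mul_right, tsum_geometric_of_lt_one (by norm_num) (by norm_num), hg2]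
            norm_num
    calc dinf x y ≤ 2 * d N x y + (2:ℝ)⁻¹ ^ N * 2 := hbound
      _ < 2 * (ε / 8) + (ε / 8) * 2 := by
          apply add_lt_add
          · linarith
          · linarith
      _ ≤ ε := by linarith
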